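/- A compact topological group is duoseparable if and only if it is separable. -/

import Mathlib

open Pointwise

/-- In a compact group, conjugation is uniformly small: for every neighborhood `U` of `1`
there is a neighborhood `V` of `1` with `g * v * g⁻¹ ∈ U` for all `g` and all `v ∈ V`. -/
lemma sin_aux {X : Type*} [Group X] [TopologicalSpace X] [IsTopologicalGroup X]
    [CompactSpace X] {U : Set X} (hU : U ∈ nhds (1 : X)) :
    ∃ V ∈ nhds (1 : X), ∀ g : X, ∀ v ∈ V, g * v * g⁻¹ ∈ U := by
  have key : ∀ g : X, ∃ A ∈ nhds g, ∃ V ∈ nhds (1 : X),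
      ∀ a ∈ A, ∀ v ∈ V, a * v * a⁻¹ ∈ U := by
    intro g
    have hc : ContinuousAt (fun p : X × X => p.1 * p.2 * p.1⁻¹) (g, 1) := by
      fun_prop
    have hmem : (fun p : X × X => p.1 * p.2 * p.1⁻¹) ⁻¹' U ∈ nhds ((g, 1) : X × X) := by
      apply hc
      simpa using hU
    rw [mem_nhds_prod_iff] at hmem
    obtain ⟨A, hA, V, hV, h⟩ := hmem
    exact ⟨A, hA, V, hV, fun a ha v hv => h (Set.mk_mem_prod ha hv)⟩
  choose A hA V hV h using key
  obtain ⟨t, ht⟩ := isCompact_univ.elim_nhds_subcover A (fun g _ => hA g)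
  refine ⟨⋂ g ∈ t, V g, ?_, ?_⟩
  · exact (Filter.biInter_finset_mem t).2 fun g _ => hV g
  · intro g v hv
    obtain ⟨a, hat, hga⟩ := Set.mem_iUnion₂.1 (ht.2 (Set.mem_univ g))
    exact h a g hga v (Set.mem_iInter₂.1 hv a hat)

theorem stmt2 (X : Type*) [Group X] [TopologicalSpace X] [IsTopologicalGroup X]
    [CompactSpace X] :
    (∃ S : Set X, S.Countable ∧ ∀ U ∈ nhds (1 : X), S * U * S = Set.univ) ↔
      TopologicalSpace.SeparableSpace X := by
  constructor
  · rintro ⟨S, hSc, hS⟩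
    refine ⟨⟨S * S, by rw [← Set.image2_mul]; exact hSc.image2 hSc _, ?_⟩⟩
    rw [dense_iff_inter_open]
    intro V hVopen ⟨x, hxV⟩
    -- U₀ := x⁻¹ • V is a neighborhood of 1
    have hU₀ : (x⁻¹ • V) ∈ nhds (1 : X) := by
      have := hVopen.smul (x⁻¹)
      refine this.mem_nhds ?_
      exact ⟨x, hxV, by simp⟩
    have hU : (x⁻¹ • V)⁻¹ ∈ nhds (1 : X) := by
      simpa using inv_mem_nhds_one X hU₀
    obtain ⟨W, hW, hWconj⟩ := sin_aux hU
    have hx : x ∈ S * W * S := by rw [hS W hW]; trivial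
    obtain ⟨sw, hsw, t, ht, hx⟩ := hx
    obtain ⟨s, hs, w, hw, hsw⟩ := hsw
    -- x = s * w * t = (s * t) * (t⁻¹ * w * t)
    have hu : t⁻¹ * w * t ∈ (x⁻¹ • V)⁻¹ := by
      simpa using hWconj t⁻¹ w hw
    have hxeq : x = (s * t) * (t⁻¹ * w * t) := by
      rw [← hx, ← hsw]; group
    have hmem : s * t ∈ V := by
      rw [Set.mem_inv, Set.mem_smul_set] at hu
      obtain ⟨v, hv, hveq⟩ := hu
      have : s * t = v := by
        have : x * (t⁻¹ * w * t) ⁻¹ = s * t := by rw [hxeq]; group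
        rw [← this]
        have : (t⁻¹ * w * t)⁻¹ = x⁻¹ • v := hveq.symm
        rw [smul_eq_mul] at this
        rw [this]; group
      rw [this]; exact hv
    exact ⟨s * t, hmem, Set.mul_mem_mul hs ht⟩
  · rintro ⟨D, hDc, hDd⟩
    refine ⟨D, hDc, fun U hU => ?_⟩
    ext x
    simp only [Set.mem_univ, iff_true]
    -- pick any point of D
    obtain ⟨s₀, hs₀⟩ : D.Nonempty := hDd.nonempty
    -- the set (x * s₀⁻¹) • U⁻¹ is a neighborhood of x * s₀⁻¹
    have hN : (x * s₀⁻¹) • U⁻¹ ∈ nhds (x * s₀⁻¹) := by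
      have h1 : U⁻¹ ∈ nhds (1 : X) := by simpa using inv_mem_nhds_one X hU
      have := smul_mem_nhds_smul (x * s₀⁻¹) h1
      simpa using this
    have := hDd.closure_eq
    have hx : x * s₀⁻¹ ∈ closure D := by rw [this]; trivial
    obtain ⟨d, hdN, hdD⟩ := mem_closure_iff_nhds.1 hx _ hN
    obtain ⟨u, hu, hdu⟩ := hdN
    rw [Set.mem_inv] at hu
    have hxeq : x = d * u⁻¹ * s₀ := by
      have : d = (x * s₀⁻¹) * u := hdu.symm
      rw [this]; group
    rw [hxeq]
    exact Set.mul_mem_mul (Set.mul_mem_mul hdD hu) hs₀
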